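/- arXiv:1307.2074 — 3 statements merged into one kernel-verified Lean document; each statement's English description precedes it below -/
import Mathlib

section
/- Let (M₀,M₁) satisfy conditions (a)–(d), let 0 < c̃ < c₁ and let ρ > 0 be such that ∂_{0,ρ}M₀(m) + M₁(m) − c̃ is maximal monotone. Let B ⊆ H_{ρ,0}(ℝ;H) ⊕ H_{ρ,0}(ℝ;H) be monotone. Then for all (u,f),(v,g) ∈ ∂_{0,ρ}M₀(m) + M₁(m) + B the estimate |u − v|_{H_{ρ,0}(ℝ;H)} ≤ (1/c̃)|f − g|_{H_{ρ,0}(ℝ;H)} holds; in other words, the inverse relation (∂_{0,ρ}M₀(m) + M₁(m) + B)^{−1} is a Lipschitz-continuous mapping. -/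
noncomputable section

open MeasureTheory Filter Topology Set

local notation "⟪" x ", " y "⟫" => @inner ℂ _ _ x y

/-- The exponentially weighted Lebesgue measure `e^{-2ρt} dt` on `ℝ`. -/
def wMeasure (ρ : ℝ) : Measure ℝ :=
  volume.withDensity fun t => ENNReal.ofReal (Real.exp (-2 * ρ * t))

/-- The weighted space `H_{ρ,0}(ℝ;H)`. -/
abbrev WL2 (ρ : ℝ) (H : Type*) [NormedAddCommGroup H] : Type _ :=
  Lp H 2 (wMeasure ρ)

/-- A relation `A ⊆ K ⊕ K` is monotone. -/
def MonotoneRel {K : Type*} [NormedAddCommGroup K] [InnerProductSpace ℂ K]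
    (A : Set (K × K)) : Prop :=
  ∀ p ∈ A, ∀ q ∈ A, 0 ≤ (⟪p.1 - q.1, p.2 - q.2⟫).re

/-- A relation is maximal monotone if it is monotone and admits no proper monotone
extension. -/
def MaximalMonotoneRel {K : Type*} [NormedAddCommGroup K] [InnerProductSpace ℂ K]
    (A : Set (K × K)) : Prop :=
  MonotoneRel A ∧ ∀ B : Set (K × K), MonotoneRel B → A ⊆ B → B = A

/-- Sum of two relations. -/
def relAdd {K : Type*} [AddCommGroup K] (A B : Set (K × K)) : Set (K × K) :=
  {p | ∃ y z, (p.1, y) ∈ A ∧ (p.1, z) ∈ B ∧ p.2 = y + z}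

/-- Inverse relation. -/
def relInv {K : Type*} (A : Set (K × K)) : Set (K × K) := {p | (p.2, p.1) ∈ A}

/-- The relation `A - c`, i.e. `{(x, y - c•x) : (x,y) ∈ A}`. -/
def relSub {K : Type*} [AddCommGroup K] [Module ℝ K] (A : Set (K × K)) (c : ℝ) :
    Set (K × K) := {p | (p.1, p.2 + c • p.1) ∈ A}

/-- Graph of a mapping. -/
def graphOf {K : Type*} (f : K → K) : Set (K × K) := {p | p.2 = f p.1}

/-- Yosida approximation `A_λ = λ⁻¹ (1 - (1 + λ A)⁻¹)` of a relation, as a relation: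
`(x, v) ∈ A_λ` iff `x = j + λ • v` for some `(j, v) ∈ A`. -/
def yosidaRel {K : Type*} [AddCommGroup K] [Module ℝ K] (l : ℝ) (A : Set (K × K)) :
    Set (K × K) := {p | ∃ j, (j, p.2) ∈ A ∧ p.1 = j + l • p.2}

variable {H : Type*} [NormedAddCommGroup H] [InnerProductSpace ℂ H] [CompleteSpace H]

/-- The graph of differentiation on smooth compactly supported functions, inside
`H_{ρ,0}(ℝ;H) ⊕ H_{ρ,0}(ℝ;H)`. -/
def testGraph (ρ : ℝ) : Set (WL2 ρ H × WL2 ρ H) :=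
  {p | ∃ φ : ℝ → H, ContDiff ℝ (⊤ : ℕ∞) φ ∧ HasCompactSupport φ ∧
    ⇑p.1 =ᵐ[wMeasure ρ] φ ∧ ⇑p.2 =ᵐ[wMeasure ρ] deriv φ}

/-- The time derivative `∂_{0,ρ}`, as a relation: the closure (in
`H_{ρ,0}(ℝ;H) ⊕ H_{ρ,0}(ℝ;H)`) of the graph of differentiation on test functions. -/
def derivRel (ρ : ℝ) : Set (WL2 ρ H × WL2 ρ H) := closure (testGraph (H := H) ρ)

/-- The lift `A_ρ` of a relation `A ⊆ H ⊕ H` to `H_{ρ,0}(ℝ;H)`. -/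
def extRel (ρ : ℝ) (A : Set (H × H)) : Set (WL2 ρ H × WL2 ρ H) :=
  {p | ∀ᵐ t ∂(wMeasure ρ), (p.1 t, p.2 t) ∈ A}

/-- The graph of `∂_{0,ρ} M₀(m)` given the multiplication operator `M0m`. -/
def dGraph (ρ : ℝ) (M0m : WL2 ρ H → WL2 ρ H) : Set (WL2 ρ H × WL2 ρ H) :=
  {p | (M0m p.1, p.2) ∈ derivRel ρ}

/-- `Mm` is the multiplication operator on `H_{ρ,0}(ℝ;H)` induced by `M`. -/
def IsMulOp (ρ : ℝ) (M : ℝ → H →L[ℂ] H) (Mm : WL2 ρ H → WL2 ρ H) : Prop :=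
  ∀ u : WL2 ρ H, ⇑(Mm u) =ᵐ[wMeasure ρ] fun t => M t (u t)

/-- `P = ι₀ ι₀*` is the orthogonal projection onto `K`. -/
def IsKerProj (K : Submodule ℂ H) (P : H →L[ℂ] H) : Prop :=
  (∀ x ∈ K, P x = x) ∧ ∀ x ∈ Kᗮ, P x = 0

/-- `M0'` is the pointwise derivative of `M0` away from the null set `N`, and `0` on `N`. -/
def IsPtwDeriv (M0 : ℝ → H →L[ℂ] H) (N : Set ℝ) (M0' : ℝ → H →L[ℂ] H) : Prop :=
  (∀ t ∉ N, ∀ x, HasDerivAt (fun s => M0 s x) (M0' t x) t) ∧ ∀ t ∈ N, M0' t = 0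


/-- Proposition 3.6: uniqueness/continuous dependence.  If
`∂_{0,ρ}M₀(m) + M₁(m) - c̃` is maximal monotone and `B` is a monotone relation on
`H_{ρ,0}(ℝ;H)`, then any two pairs in `∂_{0,ρ}M₀(m) + M₁(m) + B` satisfy
`|u - v| ≤ (1/c̃)|f - g|`, i.e. the inverse relation is a Lipschitz-continuous
mapping. -/
theorem stmt7 {H : Type*} [NormedAddCommGroup H] [InnerProductSpace ℂ H] [CompleteSpace H]
    (M0 M1 : ℝ → H →L[ℂ] H)
    -- strong measurability and boundedness of M₀, M₁
    (hmeas0 : ∀ x : H, MeasureTheory.StronglyMeasurable fun t => M0 t x)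
    (hmeas1 : ∀ x : H, MeasureTheory.StronglyMeasurable fun t => M1 t x)
    (B0 B1 : ℝ) (hB0 : ∀ t, ‖M0 t‖ ≤ B0) (hB1 : ∀ t, ‖M1 t‖ ≤ B1)
    -- condition (a): M₀ Lipschitz with selfadjoint values
    (L0 : NNReal) (hLip : LipschitzWith L0 M0) (hsa : ∀ t, IsSelfAdjoint (M0 t))
    -- condition (b): pointwise differentiability off a null set N
    (N : Set ℝ) (hN : MeasureTheory.volume N = 0)
    (hdiff : ∀ x : H, ∀ t ∉ N, DifferentiableAt ℝ (fun s => M0 s x) t)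
    -- condition (c): the kernel K = N(M₀) of M₀(t) is independent of t
    (K : Submodule ℂ H) (hker : ∀ t, LinearMap.ker (M0 t : H →ₗ[ℂ] H) = K)
    -- condition (d): ι₁* M₀(t) ι₁ - c₀ and ι₀* (Re M₁(t)) ι₀ - c₁ are monotone
    (c0 c1 : ℝ) (hc0 : 0 < c0) (hc1 : 0 < c1)
    (hpos0 : ∀ t : ℝ, ∀ x ∈ Kᗮ, c0 * ‖x‖ ^ 2 ≤ (⟪x, M0 t x⟫).re)
    (hpos1 : ∀ t : ℝ, ∀ x ∈ K, c1 * ‖x‖ ^ 2 ≤ (⟪x, M1 t x⟫).re)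
    (ctd : ℝ) (hctd0 : 0 < ctd) (hctd1 : ctd < c1)
    (ρ : ℝ) (hρ : 0 < ρ)
    -- the multiplication operators M₀(m) and M₁(m)
    (M0m M1m : WL2 ρ H → WL2 ρ H) (hM0m : IsMulOp ρ M0 M0m) (hM1m : IsMulOp ρ M1 M1m)
    -- ρ is such that ∂_{0,ρ}M₀(m) + M₁(m) - c̃ is maximal monotone
    (hmax : MaximalMonotoneRel (relSub (relAdd (dGraph ρ M0m) (graphOf M1m)) ctd))
    -- B is a monotone relation on H_{ρ,0}(ℝ;H)
    (B : Set (WL2 ρ H × WL2 ρ H)) (hB : MonotoneRel B) :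
    ∀ u f v g : WL2 ρ H,
      (u, f) ∈ relAdd (relAdd (dGraph ρ M0m) (graphOf M1m)) B →
      (v, g) ∈ relAdd (relAdd (dGraph ρ M0m) (graphOf M1m)) B →
      ‖u - v‖ ≤ (1 / ctd) * ‖f - g‖ := by
  intro u f v g hu hv
  obtain ⟨a, b, ha, hb, hf⟩ := hu
  obtain ⟨a', b', ha', hb', hg⟩ := hv
  set A := relAdd (dGraph ρ M0m) (graphOf M1m) with hA
  have hsub : ∀ x y : WL2 ρ H, (x, y) ∈ A → (x, y - ctd • x) ∈ relSub A ctd := by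
    intro x y hxy
    simp only [relSub, Set.mem_setOf_eq, sub_add_cancel]
    exact hxy
  have h1 := hmax.1 (u, a - ctd • u) (hsub u a ha) (v, a' - ctd • v) (hsub v a' ha')
  have h2 := hB (u, b) hb (v, b') hb'
  simp only at h1 h2 hf hg
  have key : ctd * ‖u - v‖ ^ 2 ≤ (⟪u - v, f - g⟫).re := by
    have hdecomp : f - g = ((a - ctd • u) - (a' - ctd • v)) + (b - b') + ctd • (u - v) := by
      rw [hf, hg]; module
    rw [hdecomp]
    rw [inner_add_right, inner_add_right]
    have hre : (⟪u - v, ctd • (u - v)⟫).re = ctd * ‖u - v‖ ^ 2 := by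
      have hsm : ctd • (u - v) = (ctd : ℂ) • (u - v) := by
        exact (Complex.coe_smul ctd (u - v)).symm
      rw [hsm, inner_smul_right]
      have : (inner ℂ (u - v) (u - v)).re = ‖u - v‖ * ‖u - v‖ :=
        inner_self_eq_norm_mul_norm (𝕜 := ℂ) _
      simp [this, sq]
    simp only [Complex.add_re, hre]
    linarith
  have hcs : (⟪u - v, f - g⟫).re ≤ ‖u - v‖ * ‖f - g‖ := re_inner_le_norm (𝕜 := ℂ) _ _
  rcases eq_or_ne (u - v) 0 with h0 | h0
  · rw [h0, norm_zero]
    positivity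
  · have hn : 0 < ‖u - v‖ := norm_pos_iff.mpr h0
    rw [div_mul_eq_mul_div, le_div_iff₀ hctd0]
    nlinarith [hcs, key]
end
end

section
/- Let X be a Banach space and F, G : X → X Lipschitz-continuous mappings with |F|_Lip · |G|_Lip < 1. Then the relation (F^{−1} + G)^{−1} is a Lipschitz-continuous mapping with domain equal to X; its Lipschitz constant is at most |F|_Lip / (1 − |F|_Lip·|G|_Lip), and for x, y ∈ X one has (x,y) ∈ (F^{−1} + G)^{−1} if and only if y = F(x − G(y)). -/
noncomputable section

/-- The relation `(F⁻¹ + G)⁻¹` for mappings `F, G`. -/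
def invSumInv {K : Type*} [AddCommGroup K] (F G : K → K) : Set (K × K) :=
  relInv (relAdd (relInv (graphOf F)) (graphOf G))

/-- Proposition 3.13, contraction part: if `F, G : X → X` are
Lipschitz with `|F|_Lip · |G|_Lip < 1` then `(F⁻¹ + G)⁻¹` is an everywhere defined
Lipschitz-continuous mapping with constant at most `|F|_Lip/(1 - |F|_Lip·|G|_Lip)`,
characterized by the fixed point equation `y = F (x - G y)`. -/
theorem stmt13 {X : Type*} [NormedAddCommGroup X] [NormedSpace ℝ X] [CompleteSpace X]
    (F G : X → X) (LF LG : NNReal)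
    (hF : LipschitzWith LF F) (hG : LipschitzWith LG G)
    -- LF and LG are the smallest Lipschitz constants
    (hFmin : ∀ L : NNReal, LipschitzWith L F → LF ≤ L)
    (hGmin : ∀ L : NNReal, LipschitzWith L G → LG ≤ L)
    (hsmall : (LF : ℝ) * (LG : ℝ) < 1) :
    (∀ x y : X, (x, y) ∈ invSumInv F G ↔ y = F (x - G y)) ∧
    (∀ x : X, ∃! y : X, (x, y) ∈ invSumInv F G) ∧
    ∀ x₀ y₀ x₁ y₁ : X, (x₀, y₀) ∈ invSumInv F G → (x₁, y₁) ∈ invSumInv F G →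
      ‖y₀ - y₁‖ ≤ ((LF : ℝ) / (1 - (LF : ℝ) * (LG : ℝ))) * ‖x₀ - x₁‖ := by
  have hchar : ∀ x y : X, (x, y) ∈ invSumInv F G ↔ y = F (x - G y) := by
    intro x y
    simp only [invSumInv, relInv, relAdd, graphOf, Set.mem_setOf_eq]
    constructor
    · rintro ⟨a, b, ha, hb, hx⟩
      have hb' : b = G y := hb
      have ha' : y = F a := ha
      have : a = x - G y := by rw [hx, hb']; abel
      rw [this] at ha'
      exact ha'
    · intro h
      exact ⟨x - G y, G y, h, rfl, by abel⟩
  have h1r : (0:ℝ) < 1 - (LF:ℝ) * (LG:ℝ) := by linarith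
  -- key estimate
  have hest : ∀ x₀ y₀ x₁ y₁ : X, y₀ = F (x₀ - G y₀) → y₁ = F (x₁ - G y₁) →
      ‖y₀ - y₁‖ ≤ ((LF : ℝ) / (1 - (LF : ℝ) * (LG : ℝ))) * ‖x₀ - x₁‖ := by
    intro x₀ y₀ x₁ y₁ h₀ h₁
    have hFd : ‖y₀ - y₁‖ ≤ (LF:ℝ) * ‖(x₀ - G y₀) - (x₁ - G y₁)‖ := by
      conv_lhs => rw [h₀, h₁]
      simpa [dist_eq_norm] using hF.dist_le_mul (x₀ - G y₀) (x₁ - G y₁)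
    have hGd : ‖G y₀ - G y₁‖ ≤ (LG:ℝ) * ‖y₀ - y₁‖ := by
      simpa [dist_eq_norm] using hG.dist_le_mul y₀ y₁
    have htri : ‖(x₀ - G y₀) - (x₁ - G y₁)‖ ≤ ‖x₀ - x₁‖ + ‖G y₀ - G y₁‖ := by
      have : (x₀ - G y₀) - (x₁ - G y₁) = (x₀ - x₁) - (G y₀ - G y₁) := by abel
      rw [this]
      exact norm_sub_le _ _
    have hLF0 : (0:ℝ) ≤ (LF:ℝ) := LF.coe_nonneg
    have hkey : ‖y₀ - y₁‖ ≤ (LF:ℝ) * (‖x₀ - x₁‖ + (LG:ℝ) * ‖y₀ - y₁‖) := by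
      calc ‖y₀ - y₁‖ ≤ (LF:ℝ) * ‖(x₀ - G y₀) - (x₁ - G y₁)‖ := hFd
        _ ≤ (LF:ℝ) * (‖x₀ - x₁‖ + (LG:ℝ) * ‖y₀ - y₁‖) := by
            apply mul_le_mul_of_nonneg_left _ hLF0
            linarith
    rw [div_mul_eq_mul_div, le_div_iff₀ h1r]
    nlinarith [norm_nonneg (y₀ - y₁), norm_nonneg (x₀ - x₁)]
  refine ⟨hchar, ?_, ?_⟩
  · intro x
    have hnE : Nonempty X := ⟨0⟩
    have hfl : LipschitzWith (LF * LG) (fun y => F (x - G y)) := by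
      have := hF.comp ((LipschitzWith.const x).sub hG)
      simpa [Function.comp_def] using this
    have hc : ContractingWith (LF * LG) (fun y => F (x - G y)) := by
      refine ⟨?_, hfl⟩
      rw [← NNReal.coe_lt_coe]
      push_cast
      exact hsmall
    set yx : X := hc.fixedPoint with hyx
    have h2 : yx = F (x - G yx) := hc.fixedPoint_isFixedPt.symm
    refine ⟨yx, (hchar x yx).mpr h2, ?_⟩
    intro y' hy'
    rw [hchar] at hy'
    have := hest x y' x yx hy' h2
    simp only [sub_self, norm_zero, mul_zero] at this
    have hnn : ‖y' - yx‖ = 0 := le_antisymm this (norm_nonneg _)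
    exact norm_sub_eq_zero_iff.mp hnn
  · intro x₀ y₀ x₁ y₁ h₀ h₁
    exact hest x₀ y₀ x₁ y₁ ((hchar _ _).mp h₀) ((hchar _ _).mp h₁)
end
end

section
/- Let H be a complex Hilbert space, ν ≥ ρ > 0, a ∈ ℝ and u ∈ H_{ρ,0}(ℝ;H) with support spt u ⊆ [a,∞). Then u ∈ H_{ν,0}(ℝ;H). Moreover, if u ∈ H_{ρ,1}(ℝ;H) then u ∈ H_{ν,1}(ℝ;H) and ∂_{0,ρ}u = ∂_{0,ν}u. -/
noncomputable section

open MeasureTheory Filter Topology Set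

local notation "⟪" x ", " y "⟫" => @inner ℂ _ _ x y

variable {H : Type*} [NormedAddCommGroup H] [InnerProductSpace ℂ H] [CompleteSpace H]

namespace Stmt15Aux

open MeasureTheory Filter Topology Set Real
open scoped ENNReal NNReal

lemma wDensity_measurable (ρ : ℝ) :
    Measurable fun t : ℝ => ENNReal.ofReal (Real.exp (-2 * ρ * t)) :=
  ENNReal.measurable_ofReal.comp
    (Real.continuous_exp.comp (continuous_const.mul continuous_id)).measurable

lemma wMeasure_ac (ρ : ℝ) : wMeasure ρ ≪ (volume : Measure ℝ) :=
  withDensity_absolutelyContinuous _ _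

lemma volume_ac (ρ : ℝ) : (volume : Measure ℝ) ≪ wMeasure ρ :=
  withDensity_absolutelyContinuous' (wDensity_measurable ρ).aemeasurable
    (Filter.Eventually.of_forall fun t => by
      simp [ENNReal.ofReal_eq_zero, not_le, Real.exp_pos])

instance (ρ : ℝ) : IsLocallyFiniteMeasure (wMeasure ρ) :=
  IsLocallyFiniteMeasure.withDensity_ofReal
    (Real.continuous_exp.comp (continuous_const.mul continuous_id))

lemma lintegral_wMeasure (ρ : ℝ) (g : ℝ → ℝ≥0∞) :
    ∫⁻ t, g t ∂(wMeasure ρ) =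
      ∫⁻ t, ENNReal.ofReal (Real.exp (-2 * ρ * t)) * g t ∂(volume : Measure ℝ) :=
  lintegral_withDensity_eq_lintegral_mul_non_measurable volume (wDensity_measurable ρ)
    (Filter.Eventually.of_forall fun _ => ENNReal.ofReal_lt_top) g

lemma integral_wMeasure (ρ : ℝ) {E : Type*} [NormedAddCommGroup E] [NormedSpace ℝ E]
    (g : ℝ → E) :
    ∫ t, g t ∂(wMeasure ρ) = ∫ t, Real.exp (-2 * ρ * t) • g t ∂(volume : Measure ℝ) := by
  have h : wMeasure ρ
      = volume.withDensity fun t => (((Real.exp (-2 * ρ * t)).toNNReal : ℝ≥0) : ℝ≥0∞) := rfl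
  have hm : Measurable fun t : ℝ => (Real.exp (-2 * ρ * t)).toNNReal :=
    (Real.continuous_exp.comp (continuous_const.mul continuous_id)).measurable.real_toNNReal
  rw [h, integral_withDensity_eq_integral_smul (f := fun t : ℝ => (Real.exp (-2 * ρ * t)).toNNReal) hm g]
  refine integral_congr_ae (Filter.Eventually.of_forall fun t => ?_)
  show (Real.exp (-2 * ρ * t)).toNNReal • g t = Real.exp (-2 * ρ * t) • g t
  rw [NNReal.smul_def, Real.coe_toNNReal _ (Real.exp_pos _).le]

lemma eLpNorm_wMeasure_mono {H : Type*} [NormedAddCommGroup H] {ρ ν : ℝ} (hρν : ρ ≤ ν) (b : ℝ)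
    {f : ℝ → H} (hf : ∀ᵐ t ∂(volume : Measure ℝ), t < b → f t = 0) :
    eLpNorm f 2 (wMeasure ν) ≤
      ENNReal.ofReal (Real.exp ((ρ - ν) * b)) * eLpNorm f 2 (wMeasure ρ) := by
  set c := ENNReal.ofReal (Real.exp ((ρ - ν) * b)) with hc
  have hc2 : c ^ (2 : ℝ) = ENNReal.ofReal (Real.exp (2 * (ρ - ν) * b)) := by
    rw [hc, ENNReal.ofReal_rpow_of_pos (Real.exp_pos _), ← Real.exp_mul]
    congr 2
    ring
  have h2 : ((2 : ℝ≥0∞)).toReal = 2 := by norm_num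
  rw [eLpNorm_eq_lintegral_rpow_enorm_toReal two_ne_zero ENNReal.ofNat_ne_top,
      eLpNorm_eq_lintegral_rpow_enorm_toReal two_ne_zero ENNReal.ofNat_ne_top, h2,
      lintegral_wMeasure, lintegral_wMeasure]
  have key : (∫⁻ t, ENNReal.ofReal (Real.exp (-2 * ν * t)) * (‖f t‖₊ : ℝ≥0∞) ^ (2:ℝ) ∂volume)
      ≤ c ^ (2:ℝ) *
        ∫⁻ t, ENNReal.ofReal (Real.exp (-2 * ρ * t)) * (‖f t‖₊ : ℝ≥0∞) ^ (2:ℝ) ∂volume := by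
    rw [← lintegral_const_mul' _ _ (by rw [hc2]; exact ENNReal.ofReal_ne_top)]
    refine lintegral_mono_ae ?_
    filter_upwards [hf] with t ht
    by_cases hbt : t < b
    · simp [ht hbt]
    · push_neg at hbt
      rw [← mul_assoc, hc2, ← ENNReal.ofReal_mul (Real.exp_pos _).le, ← Real.exp_add]
      refine mul_le_mul_left (ENNReal.ofReal_le_ofReal (Real.exp_le_exp.2 ?_)) _
      nlinarith
  calc (∫⁻ t, ENNReal.ofReal (Real.exp (-2 * ν * t)) * (‖f t‖₊ : ℝ≥0∞) ^ (2:ℝ) ∂volume) ^ (1/2:ℝ)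
      ≤ (c ^ (2:ℝ) *
        ∫⁻ t, ENNReal.ofReal (Real.exp (-2 * ρ * t)) * (‖f t‖₊ : ℝ≥0∞) ^ (2:ℝ) ∂volume) ^ (1/2:ℝ) :=
        ENNReal.rpow_le_rpow key (by norm_num)
    _ = c * (∫⁻ t, ENNReal.ofReal (Real.exp (-2 * ρ * t))
          * (‖f t‖₊ : ℝ≥0∞) ^ (2:ℝ) ∂volume) ^ (1/2:ℝ) := by
        rw [ENNReal.mul_rpow_of_nonneg _ _ (by norm_num), ← ENNReal.rpow_mul]
        norm_num

lemma memℒp_wMeasure_mono {H : Type*} [NormedAddCommGroup H] {ρ ν : ℝ} (hρν : ρ ≤ ν) (b : ℝ)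
    {f : ℝ → H} (hmem : MemLp f 2 (wMeasure ρ))
    (hf : ∀ᵐ t ∂(volume : Measure ℝ), t < b → f t = 0) :
    MemLp f 2 (wMeasure ν) :=
  ⟨hmem.1.mono_ac ((wMeasure_ac ν).trans (volume_ac ρ)),
    lt_of_le_of_lt (eLpNorm_wMeasure_mono hρν b hf)
      (ENNReal.mul_lt_top ENNReal.ofReal_lt_top hmem.2)⟩
variable {H : Type*} [NormedAddCommGroup H] [InnerProductSpace ℂ H]

lemma le_top' : (1 : WithTop ℕ∞) ≤ ((⊤ : ℕ∞) : WithTop ℕ∞) := by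
  exact_mod_cast le_top

lemma ibp (ρ : ℝ) {φ ψ : ℝ → H} (hφ : ContDiff ℝ (⊤ : ℕ∞) φ) (hφc : HasCompactSupport φ)
    (hψ : ContDiff ℝ (⊤ : ℕ∞) ψ) :
    ∫ t, ⟪ψ t, deriv φ t⟫ ∂(wMeasure ρ) =
      ∫ t, ⟪(2 * ρ) • ψ t - deriv ψ t, φ t⟫ ∂(wMeasure ρ) := by
  have hψd : Differentiable ℝ ψ := hψ.differentiable (zero_lt_one.trans_le le_top').ne'
  have hφd : Differentiable ℝ φ := hφ.differentiable (zero_lt_one.trans_le le_top').ne'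
  set G₁ : ℝ → ℂ := fun t => Real.exp (-2 * ρ * t) • ⟪ψ t, deriv φ t⟫ with hG₁
  set G₂ : ℝ → ℂ := fun t => Real.exp (-2 * ρ * t) • ⟪(2 * ρ) • ψ t - deriv ψ t, φ t⟫ with hG₂
  set F : ℝ → ℂ := fun t => Real.exp (-2 * ρ * t) • ⟪ψ t, φ t⟫ with hF
  have hexp : ∀ t : ℝ, HasDerivAt (fun s : ℝ => Real.exp (-2 * ρ * s))
      ((-2 * ρ) * Real.exp (-2 * ρ * t)) t := by
    intro t
    have h1 : HasDerivAt (fun s : ℝ => -2 * ρ * s) (-2 * ρ) t := by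
      simpa using (hasDerivAt_id t).const_mul (-2 * ρ)
    simpa [mul_comm] using h1.exp
  have hFd : ∀ t, HasDerivAt F
      (Real.exp (-2 * ρ * t) • (⟪ψ t, deriv φ t⟫ + ⟪deriv ψ t, φ t⟫)
        + ((-2 * ρ) * Real.exp (-2 * ρ * t)) • ⟪ψ t, φ t⟫) t := fun t =>
    (hexp t).smul (HasDerivAt.inner ℂ ((hψd t).hasDerivAt) ((hφd t).hasDerivAt))
  have hsuppF : Function.support F ⊆ Function.support φ := by
    intro x hx
    simp only [Function.mem_support] at hx ⊢
    contrapose! hx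
    simp [hF, hx]
  have hFc : HasCompactSupport F := hφc.mono hsuppF
  have hF1 : ContDiff ℝ 1 F := by
    have he : ContDiff ℝ (⊤ : ℕ∞) (fun t : ℝ => Real.exp (-2 * ρ * t)) :=
      Real.contDiff_exp.comp (contDiff_const.mul contDiff_id)
    exact (he.smul (ContDiff.inner ℂ hψ hφ)).of_le le_top'
  obtain ⟨b0, hb0⟩ := hφc.isCompact.bddAbove
  have hb : tsupport φ ⊆ Iio (b0 + 1) := fun x hx => by
    have := hb0 hx; simp only [Set.mem_Iio]; linarith
  have hsubF : tsupport F ⊆ Iio (b0 + 1) := (closure_mono hsuppF).trans hb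
  have hFb : F (b0 + 1) = 0 :=
    image_eq_zero_of_notMem_tsupport fun h => absurd (hsubF h) (by simp)
  have hzero : ∫ x, deriv F x ∂(volume : Measure ℝ) = 0 := by
    rw [← setIntegral_eq_integral_of_forall_compl_eq_zero (s := Iic (b0 + 1)) (μ := volume)
      (fun x hx => ?_), HasCompactSupport.integral_Iic_deriv_eq hF1 hFc (b0 + 1), hFb]
    have hxt : x ∉ tsupport F := by
      intro hmem
      have h1 := hsubF hmem
      simp only [Set.mem_Iio] at h1
      simp only [Set.mem_Iic, not_le] at hx
      linarith
    by_contra hne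
    exact hxt (support_deriv_subset (Function.mem_support.2 hne))
  have hderivF : ∀ t, deriv F t = G₁ t - G₂ t := by
    intro t
    rw [(hFd t).deriv, hG₁, hG₂]
    have hsm : ∀ x y : H, (inner ℂ ((2 * ρ) • x) y : ℂ) = ((2 * ρ : ℝ) : ℂ) * inner ℂ x y := by
      intro x y
      rw [show (2 * ρ) • x = (((2 * ρ : ℝ) : ℂ)) • x by rw [Complex.coe_smul], inner_smul_left,
        Complex.conj_ofReal]
    simp only [inner_sub_left, hsm, Complex.real_smul]
    push_cast
    ring
  have hcont₁ : Continuous G₁ :=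
    ((Real.continuous_exp.comp (continuous_const.mul continuous_id)).smul
      (hψ.continuous.inner (hφ.continuous_deriv le_top')))
  have hcont₂ : Continuous G₂ :=
    ((Real.continuous_exp.comp (continuous_const.mul continuous_id)).smul
      (((hψ.continuous.const_smul _).sub (hψ.continuous_deriv le_top')).inner hφ.continuous))
  have hcs₁ : HasCompactSupport G₁ := by
    refine (hφc.deriv).mono fun x hx => ?_
    simp only [Function.mem_support] at hx ⊢
    contrapose! hx
    simp [hG₁, hx]
  have hcs₂ : HasCompactSupport G₂ := by
    refine hφc.mono fun x hx => ?_
    simp only [Function.mem_support] at hx ⊢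
    contrapose! hx
    simp [hG₂, hx]
  have hint₁ : Integrable G₁ (volume : Measure ℝ) :=
    hcont₁.integrable_of_hasCompactSupport hcs₁
  have hint₂ : Integrable G₂ (volume : Measure ℝ) :=
    hcont₂.integrable_of_hasCompactSupport hcs₂
  have hsum : ∫ t, G₁ t ∂(volume : Measure ℝ) - ∫ t, G₂ t ∂(volume : Measure ℝ) = 0 := by
    rw [← integral_sub hint₁ hint₂, ← hzero]
    exact integral_congr_ae (Filter.Eventually.of_forall fun t => (hderivF t).symm)
  rw [integral_wMeasure, integral_wMeasure]
  exact sub_eq_zero.mp hsum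
lemma causality {H : Type*} [NormedAddCommGroup H] [InnerProductSpace ℂ H] [CompleteSpace H]
    {ρ : ℝ} {a : ℝ} {u u' : WL2 ρ H}
    (hspt : ∀ᵐ t ∂(volume : Measure ℝ), t < a → u t = 0)
    (hd : (u, u') ∈ derivRel ρ) :
    ∀ᵐ t ∂(volume : Measure ℝ), t < a → u' t = 0 := by
  obtain ⟨p, hp, hlim⟩ := mem_closure_iff_seq_limit.1 hd
  choose φ hφsm hφc hφ1 hφ2 using hp
  have hlim1 : Tendsto (fun n => (p n).1) atTop (𝓝 u) := (continuous_fst.tendsto (u, u')).comp hlim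
  have hlim2 : Tendsto (fun n => (p n).2) atTop (𝓝 u') := (continuous_snd.tendsto (u, u')).comp hlim
  -- Step 1: the weak characterization
  have key : ∀ ψ : ℝ → H, ContDiff ℝ (⊤ : ℕ∞) ψ → HasCompactSupport ψ → tsupport ψ ⊆ Iio a →
      ∫ t, ⟪ψ t, (u' : ℝ → H) t⟫ ∂(wMeasure ρ) = 0 := by
    intro ψ hψ hψc hψs
    have hψcont : Continuous ψ := hψ.continuous
    have hψmem : MemLp ψ 2 (wMeasure ρ) := hψcont.memLp_of_hasCompactSupport hψc
    set θ : ℝ → H := fun t => (2 * ρ) • ψ t - deriv ψ t with hθ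
    have hθcont : Continuous θ := (hψcont.const_smul _).sub (hψ.continuous_deriv le_top')
    have hθc : HasCompactSupport θ := by
      refine HasCompactSupport.intro hψc fun x hx => ?_
      have hψx : ψ x = 0 := image_eq_zero_of_notMem_tsupport hx
      have hdx : deriv ψ x = 0 := by
        by_contra hne
        exact hx (support_deriv_subset (Function.mem_support.2 hne))
      show (2 * ρ) • ψ x - deriv ψ x = 0
      rw [hψx, hdx]
      simp
    have hθmem : MemLp θ 2 (wMeasure ρ) := hθcont.memLp_of_hasCompactSupport hθc
    set Ψ : WL2 ρ H := hψmem.toLp ψ with hΨ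
    set Θ : WL2 ρ H := hθmem.toLp θ with hΘ
    have heq : ∀ n, (inner ℂ Ψ ((p n).2) : ℂ) = inner ℂ Θ ((p n).1) := by
      intro n
      rw [L2.inner_def, L2.inner_def]
      have h1 : ∫ t, ⟪(Ψ : ℝ → H) t, ((p n).2 : ℝ → H) t⟫ ∂(wMeasure ρ)
          = ∫ t, ⟪ψ t, deriv (φ n) t⟫ ∂(wMeasure ρ) := by
        refine integral_congr_ae ?_
        filter_upwards [hψmem.coeFn_toLp, hφ2 n] with t h1 h2
        rw [h1, h2]
      have h2 : ∫ t, ⟪(Θ : ℝ → H) t, ((p n).1 : ℝ → H) t⟫ ∂(wMeasure ρ)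
          = ∫ t, ⟪θ t, φ n t⟫ ∂(wMeasure ρ) := by
        refine integral_congr_ae ?_
        filter_upwards [hθmem.coeFn_toLp, hφ1 n] with t h1 h2
        rw [h1, h2]
      rw [h1, h2, ibp ρ (hφsm n) (hφc n) hψ]
    have hl1 : Tendsto (fun n => (inner ℂ Ψ ((p n).2) : ℂ)) atTop (𝓝 (inner ℂ Ψ u')) :=
      tendsto_const_nhds.inner hlim2
    have hl2 : Tendsto (fun n => (inner ℂ Θ ((p n).1) : ℂ)) atTop (𝓝 (inner ℂ Θ u)) :=
      tendsto_const_nhds.inner hlim1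
    have hPsu' : (inner ℂ Ψ u' : ℂ) = inner ℂ Θ u :=
      tendsto_nhds_unique (hl1.congr fun n => heq n) hl2
    have hΘu : (inner ℂ Θ u : ℂ) = 0 := by
      rw [L2.inner_def]
      refine integral_eq_zero_of_ae ?_
      filter_upwards [hθmem.coeFn_toLp, (wMeasure_ac ρ).ae_le hspt] with t h1 h2
      simp only [Pi.zero_apply]
      rw [h1]
      by_cases hta : t < a
      · rw [h2 hta, inner_zero_right]
      · have hts : t ∉ tsupport ψ := fun hmem => hta (hψs hmem)
        have hψt : ψ t = 0 := image_eq_zero_of_notMem_tsupport hts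
        have hdt : deriv ψ t = 0 := by
          by_contra hne
          exact hts (support_deriv_subset (Function.mem_support.2 hne))
        simp [hθ, hψt, hdt]
    have hfin : (inner ℂ Ψ u' : ℂ) = 0 := by rw [hPsu', hΘu]
    rw [L2.inner_def] at hfin
    rw [← hfin]
    refine integral_congr_ae ?_
    filter_upwards [hψmem.coeFn_toLp] with t h
    rw [h]
  -- Step 2: local integrability of the weighted function
  have hli : LocallyIntegrable (fun t => Real.exp (-2 * ρ * t) • (u' : ℝ → H) t)
      (volume : Measure ℝ) := by
    rw [locallyIntegrable_iff]
    intro K hK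
    haveI : IsFiniteMeasure ((wMeasure ρ).restrict K) :=
      ⟨by rw [Measure.restrict_apply_univ]; exact hK.measure_lt_top⟩
    have h2 : MemLp (⇑u') 2 ((wMeasure ρ).restrict K) := (Lp.memLp u').restrict K
    have h1 : Integrable (⇑u') ((wMeasure ρ).restrict K) :=
      memLp_one_iff_integrable.1 (h2.mono_exponent (by norm_num))
    have hres : (wMeasure ρ).restrict K
        = (volume.restrict K).withDensity fun t => (((Real.exp (-2 * ρ * t)).toNNReal : ℝ≥0) : ℝ≥0∞) :=
      restrict_withDensity hK.measurableSet _
    have hm : Measurable fun t : ℝ => (Real.exp (-2 * ρ * t)).toNNReal :=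
      (Real.continuous_exp.comp (continuous_const.mul continuous_id)).measurable.real_toNNReal
    rw [hres, integrable_withDensity_iff_integrable_smul
      (f := fun t : ℝ => (Real.exp (-2 * ρ * t)).toNNReal) hm] at h1
    refine h1.congr (Filter.Eventually.of_forall fun t => ?_)
    show (Real.exp (-2 * ρ * t)).toNNReal • (u' : ℝ → H) t = Real.exp (-2 * ρ * t) • (u' : ℝ → H) t
    rw [NNReal.smul_def, Real.coe_toNNReal _ (Real.exp_pos _).le]
  -- Step 3: fundamental lemma of calculus of variations
  have hae : ∀ᵐ t ∂(volume : Measure ℝ), t ∈ Iio a →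
      Real.exp (-2 * ρ * t) • (u' : ℝ → H) t = 0 := by
    refine isOpen_Iio.ae_eq_zero_of_integral_contDiff_smul_eq_zero
      (hli.locallyIntegrableOn _) ?_
    intro g hg hgc hgs
    refine ext_inner_left ℂ fun c => ?_
    rw [inner_zero_right]
    have hint : Integrable (fun t => g t • (Real.exp (-2 * ρ * t) • (u' : ℝ → H) t))
        (volume : Measure ℝ) :=
      hli.integrable_smul_left_of_hasCompactSupport hg.continuous hgc
    rw [← integral_inner hint c]
    set ψ : ℝ → H := fun t => g t • c with hψdef
    have hψ : ContDiff ℝ (⊤ : ℕ∞) ψ := hg.smul contDiff_const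
    have hψc : HasCompactSupport ψ := by
      refine hgc.mono fun t ht => ?_
      simp only [Function.mem_support] at ht ⊢
      contrapose! ht
      simp [hψdef, ht]
    have hψs : tsupport ψ ⊆ Iio a := by
      have hsub : Function.support ψ ⊆ Function.support g := by
        intro t ht
        simp only [Function.mem_support] at ht ⊢
        contrapose! ht
        simp [hψdef, ht]
      exact subset_trans (closure_mono hsub) hgs
    have h0 := key ψ hψ hψc hψs
    rw [integral_wMeasure] at h0
    rw [← h0]
    refine integral_congr_ae (Filter.Eventually.of_forall fun t => ?_)
    show inner ℂ c (g t • Real.exp (-2 * ρ * t) • (u' : ℝ → H) t)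
        = Real.exp (-2 * ρ * t) • (inner ℂ (g t • c) ((u' : ℝ → H) t) : ℂ)
    rw [smul_smul,
      show (g t * Real.exp (-2 * ρ * t)) • (u' : ℝ → H) t
        = (((g t * Real.exp (-2 * ρ * t) : ℝ) : ℂ)) • (u' : ℝ → H) t by rw [Complex.coe_smul],
      inner_smul_right,
      show g t • c = (((g t : ℝ) : ℂ)) • c by rw [Complex.coe_smul],
      inner_smul_left, Complex.conj_ofReal, Complex.real_smul]
    push_cast
    ring
  filter_upwards [hae] with t ht hta
  have h := ht hta
  have hne : Real.exp (-2 * ρ * t) ≠ 0 := (Real.exp_pos _).ne'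
  exact (smul_eq_zero.mp h).resolve_left hne
end Stmt15Aux

open scoped ENNReal NNReal

open Stmt15Aux in
/-- Lemma 3.14: if `ν ≥ ρ > 0` and `u ∈ H_{ρ,0}(ℝ;H)` is supported on
`[a,∞)`, then `u ∈ H_{ν,0}(ℝ;H)`; moreover, if `u ∈ H_{ρ,1}(ℝ;H)` then
`u ∈ H_{ν,1}(ℝ;H)` and `∂_{0,ρ} u = ∂_{0,ν} u`. -/
theorem stmt15 {H : Type*} [NormedAddCommGroup H] [InnerProductSpace ℂ H] [CompleteSpace H]
    (ρ ν : ℝ) (hρ : 0 < ρ) (hν : ρ ≤ ν) (a : ℝ)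
    (u : WL2 ρ H) (hspt : ∀ᵐ t ∂(MeasureTheory.volume), t < a → u t = 0) :
    (∃ w : WL2 ν H, ⇑w =ᵐ[MeasureTheory.volume] ⇑u) ∧
    ∀ u' : WL2 ρ H, (u, u') ∈ derivRel ρ →
      ∃ w w' : WL2 ν H, ⇑w =ᵐ[MeasureTheory.volume] ⇑u ∧
        ⇑w' =ᵐ[MeasureTheory.volume] ⇑u' ∧ (w, w') ∈ derivRel ν := by
  classical
  have hu_memν : MemLp (⇑u) 2 (wMeasure ν) :=
    memℒp_wMeasure_mono hν a (Lp.memLp u) hspt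
  refine ⟨⟨hu_memν.toLp _, (volume_ac ν).ae_eq hu_memν.coeFn_toLp⟩, ?_⟩
  intro u' hu'
  have hspt' : ∀ᵐ t ∂(volume : Measure ℝ), t < a → u' t = 0 := causality hspt hu'
  have hu'_memν : MemLp (⇑u') 2 (wMeasure ν) :=
    memℒp_wMeasure_mono hν a (Lp.memLp u') hspt'
  set w : WL2 ν H := hu_memν.toLp _ with hw
  set w' : WL2 ν H := hu'_memν.toLp _ with hw'
  refine ⟨w, w', (volume_ac ν).ae_eq hu_memν.coeFn_toLp,
    (volume_ac ν).ae_eq hu'_memν.coeFn_toLp, ?_⟩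
  -- the cutoff function
  set χ : ℝ → ℝ := fun t => Real.smoothTransition (t - (a - 2)) with hχdef
  have hχ : ContDiff ℝ (⊤ : ℕ∞) χ :=
    Real.smoothTransition.contDiff.comp (contDiff_id.sub contDiff_const)
  have hχ0 : ∀ t, t ≤ a - 2 → χ t = 0 := fun t ht =>
    Real.smoothTransition.zero_of_nonpos (by linarith)
  have hχ1 : ∀ t, a - 1 ≤ t → χ t = 1 := fun t ht =>
    Real.smoothTransition.one_of_one_le (by linarith)
  have hχbd : ∀ t, ‖χ t‖ ≤ 1 := fun t => by
    rw [Real.norm_eq_abs, abs_le]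
    exact ⟨by linarith [Real.smoothTransition.nonneg (t - (a - 2))],
      Real.smoothTransition.le_one _⟩
  have hχd0 : ∀ t, t < a - 2 → deriv χ t = 0 := by
    intro t ht
    have heq : χ =ᶠ[𝓝 t] (fun _ => (0 : ℝ)) := by
      filter_upwards [Iio_mem_nhds ht] with s hs
      exact hχ0 s (le_of_lt hs)
    rw [heq.deriv_eq, deriv_const]
  have hχd1 : ∀ t, a - 1 < t → deriv χ t = 0 := by
    intro t ht
    have heq : χ =ᶠ[𝓝 t] (fun _ => (1 : ℝ)) := by
      filter_upwards [Ioi_mem_nhds ht] with s hs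
      exact hχ1 s (le_of_lt hs)
    rw [heq.deriv_eq, deriv_const]
  have hχdc : HasCompactSupport (deriv χ) := by
    refine HasCompactSupport.intro (isCompact_Icc (a := a - 2) (b := a - 1)) fun x hx => ?_
    simp only [Set.mem_Icc, not_and_or, not_le] at hx
    rcases hx with hx | hx
    · exact hχd0 x hx
    · exact hχd1 x hx
  obtain ⟨M, hM⟩ := (hχ.continuous_deriv le_top').bounded_above_of_compact_support hχdc
  have hM0 : 0 ≤ M := (norm_nonneg _).trans (hM 0)
  have hχdiff : Differentiable ℝ χ := hχ.differentiable (zero_lt_one.trans_le le_top').ne'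
  -- approximating sequence
  obtain ⟨p, hp, hlim⟩ := mem_closure_iff_seq_limit.1 hu'
  choose φ hφsm hφc hφ1 hφ2 using hp
  have hlim1 : Tendsto (fun n => (p n).1) atTop (𝓝 u) :=
    (continuous_fst.tendsto (u, u')).comp hlim
  have hlim2 : Tendsto (fun n => (p n).2) atTop (𝓝 u') :=
    (continuous_snd.tendsto (u, u')).comp hlim
  have he1 : Tendsto (fun n => eLpNorm (⇑((p n).1) - ⇑u) 2 (wMeasure ρ)) atTop (𝓝 0) :=
    (Lp.tendsto_Lp_iff_tendsto_eLpNorm' _ _).1 hlim1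
  have he2 : Tendsto (fun n => eLpNorm (⇑((p n).2) - ⇑u') 2 (wMeasure ρ)) atTop (𝓝 0) :=
    (Lp.tendsto_Lp_iff_tendsto_eLpNorm' _ _).1 hlim2
  -- cut-off test functions
  set ψ : ℕ → ℝ → H := fun n t => χ t • φ n t with hψdef
  have hψsm : ∀ n, ContDiff ℝ (⊤ : ℕ∞) (ψ n) := fun n => hχ.smul (hφsm n)
  have hψc : ∀ n, HasCompactSupport (ψ n) := fun n => (hφc n).smul_left
  have hψd : ∀ n t, HasDerivAt (ψ n) (χ t • deriv (φ n) t + deriv χ t • φ n t) t := fun n t =>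
    ((hχdiff t).hasDerivAt).smul (((hφsm n).differentiable (zero_lt_one.trans_le le_top').ne' t).hasDerivAt)
  have hψderiv : ∀ n, deriv (ψ n) = fun t => χ t • deriv (φ n) t + deriv χ t • φ n t :=
    fun n => funext fun t => (hψd n t).deriv
  have hmem1 : ∀ n, MemLp (ψ n) 2 (wMeasure ν) := fun n =>
    ((hψsm n).continuous).memLp_of_hasCompactSupport (hψc n)
  have hmem2 : ∀ n, MemLp (deriv (ψ n)) 2 (wMeasure ν) := fun n =>
    ((hψsm n).continuous_deriv le_top').memLp_of_hasCompactSupport (hψc n).deriv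
  set q : ℕ → WL2 ν H × WL2 ν H := fun n => ((hmem1 n).toLp _, (hmem2 n).toLp _) with hq
  have hqmem : ∀ n, q n ∈ testGraph (H := H) ν := fun n =>
    ⟨ψ n, hψsm n, hψc n, (hmem1 n).coeFn_toLp, (hmem2 n).coeFn_toLp⟩
  set c : ℝ≥0∞ := ENNReal.ofReal (Real.exp ((ρ - ν) * (a - 2))) with hcdef
  have hcne : c ≠ ⊤ := ENNReal.ofReal_ne_top
  -- first component
  have hb1 : ∀ n, eLpNorm (⇑(q n).1 - ⇑w) 2 (wMeasure ν)
      ≤ c * eLpNorm (⇑((p n).1) - ⇑u) 2 (wMeasure ρ) := by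
    intro n
    set r : ℝ → H := fun t => χ t • (φ n t - u t) with hr
    have hvol : ∀ᵐ t ∂(volume : Measure ℝ), ψ n t - u t = r t := by
      filter_upwards [hspt] with t ht
      simp only [hr, hψdef]
      by_cases hta : t < a
      · rw [ht hta]; simp
      · push_neg at hta
        have h1 : χ t = 1 := hχ1 t (by linarith)
        rw [h1]; simp
    have hae : (⇑(q n).1 - ⇑w) =ᵐ[wMeasure ν] r := by
      filter_upwards [(hmem1 n).coeFn_toLp, hu_memν.coeFn_toLp,
        (wMeasure_ac ν).ae_le hvol] with t h1 h2 h3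
      simp only [Pi.sub_apply]
      rw [show (⇑(q n).1) t = ψ n t from h1, show (⇑w) t = u t from h2]
      exact h3
    rw [eLpNorm_congr_ae hae]
    have hsupp : ∀ᵐ t ∂(volume : Measure ℝ), t < a - 2 → r t = 0 :=
      Filter.Eventually.of_forall fun t ht => by simp [hr, hχ0 t (le_of_lt ht)]
    refine (eLpNorm_wMeasure_mono hν (a - 2) hsupp).trans (mul_le_mul_right ?_ c)
    have h1 : eLpNorm r 2 (wMeasure ρ) ≤ eLpNorm (fun t => φ n t - u t) 2 (wMeasure ρ) := by
      refine eLpNorm_mono_ae (Filter.Eventually.of_forall fun t => ?_)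
      rw [show r t = χ t • (φ n t - u t) from rfl, norm_smul]
      exact mul_le_of_le_one_left (norm_nonneg _) (hχbd t)
    refine h1.trans (le_of_eq (eLpNorm_congr_ae ?_))
    filter_upwards [hφ1 n] with t h
    simp only [Pi.sub_apply]
    rw [h]
  have hcm1 : Tendsto (fun n => c * eLpNorm (⇑((p n).1) - ⇑u) 2 (wMeasure ρ)) atTop (𝓝 0) := by
    have := ENNReal.Tendsto.const_mul (a := c) he1 (Or.inr hcne)
    simpa using this
  have conv1 : Tendsto (fun n => (q n).1) atTop (𝓝 w) := by
    refine (Lp.tendsto_Lp_iff_tendsto_eLpNorm' _ _).2 ?_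
    exact tendsto_of_tendsto_of_tendsto_of_le_of_le tendsto_const_nhds hcm1
      (fun n => zero_le) hb1
  -- second component
  have hb2 : ∀ n, eLpNorm (⇑(q n).2 - ⇑w') 2 (wMeasure ν)
      ≤ c * ((ENNReal.ofReal M) * eLpNorm (⇑((p n).1) - ⇑u) 2 (wMeasure ρ)
        + eLpNorm (⇑((p n).2) - ⇑u') 2 (wMeasure ρ)) := by
    intro n
    set s1 : ℝ → H := fun t => deriv χ t • (φ n t - u t) with hs1
    set s2 : ℝ → H := fun t => χ t • (deriv (φ n) t - u' t) with hs2
    have hvol : ∀ᵐ t ∂(volume : Measure ℝ), deriv (ψ n) t - u' t = s1 t + s2 t := by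
      filter_upwards [hspt, hspt'] with t h1 h2
      rw [hψderiv n]
      simp only [hs1, hs2]
      by_cases hta : t < a
      · rw [h1 hta, h2 hta]
        simp only [sub_zero]
        abel
      · push_neg at hta
        have hχt : χ t = 1 := hχ1 t (by linarith)
        have hdt : deriv χ t = 0 := hχd1 t (by linarith)
        rw [hχt, hdt]
        simp only [zero_smul, one_smul, zero_add, smul_sub]
        abel
    have hae : (⇑(q n).2 - ⇑w') =ᵐ[wMeasure ν] (s1 + s2) := by
      filter_upwards [(hmem2 n).coeFn_toLp, hu'_memν.coeFn_toLp,
        (wMeasure_ac ν).ae_le hvol] with t h1 h2 h3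
      simp only [Pi.sub_apply, Pi.add_apply]
      rw [show (⇑(q n).2) t = deriv (ψ n) t from h1, show (⇑w') t = u' t from h2]
      exact h3
    rw [eLpNorm_congr_ae hae]
    have hsupp : ∀ᵐ t ∂(volume : Measure ℝ), t < a - 2 → (s1 + s2) t = 0 :=
      Filter.Eventually.of_forall fun t ht => by
        simp [hs1, hs2, hχ0 t (le_of_lt ht), hχd0 t ht]
    refine (eLpNorm_wMeasure_mono hν (a - 2) hsupp).trans (mul_le_mul_right ?_ c)
    have hasm1 : AEStronglyMeasurable s1 (wMeasure ρ) :=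
      ((hχ.continuous_deriv le_top').aestronglyMeasurable).smul
        (((hφsm n).continuous.aestronglyMeasurable).sub (Lp.aestronglyMeasurable u))
    have hasm2 : AEStronglyMeasurable s2 (wMeasure ρ) :=
      (hχ.continuous.aestronglyMeasurable).smul
        ((((hφsm n).continuous_deriv le_top').aestronglyMeasurable).sub
          (Lp.aestronglyMeasurable u'))
    refine (eLpNorm_add_le hasm1 hasm2 (by norm_num)).trans (add_le_add ?_ ?_)
    · have h1 : eLpNorm s1 2 (wMeasure ρ)
          ≤ eLpNorm (M • fun t => φ n t - u t) 2 (wMeasure ρ) := by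
        refine eLpNorm_mono_ae (Filter.Eventually.of_forall fun t => ?_)
        show ‖deriv χ t • (φ n t - u t)‖ ≤ ‖(M • fun s => φ n s - u s) t‖
        simp only [Pi.smul_apply]
        rw [norm_smul, norm_smul, Real.norm_eq_abs M, abs_of_nonneg hM0]
        exact mul_le_mul_of_nonneg_right (hM t) (norm_nonneg _)
      refine h1.trans ?_
      rw [eLpNorm_const_smul]
      have hMM : ‖M‖ₑ = ENNReal.ofReal M := by
        rw [← ofReal_norm_eq_enorm, Real.norm_eq_abs, abs_of_nonneg hM0]
      rw [hMM]
      refine mul_le_mul_right (le_of_eq (eLpNorm_congr_ae ?_)) _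
      filter_upwards [hφ1 n] with t h
      simp only [Pi.sub_apply]
      rw [h]
    · have h2 : eLpNorm s2 2 (wMeasure ρ)
          ≤ eLpNorm (fun t => deriv (φ n) t - u' t) 2 (wMeasure ρ) := by
        refine eLpNorm_mono_ae (Filter.Eventually.of_forall fun t => ?_)
        rw [show s2 t = χ t • (deriv (φ n) t - u' t) from rfl, norm_smul]
        exact mul_le_of_le_one_left (norm_nonneg _) (hχbd t)
      refine h2.trans (le_of_eq (eLpNorm_congr_ae ?_))
      filter_upwards [hφ2 n] with t h
      simp only [Pi.sub_apply]
      rw [h]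
  have hcm2 : Tendsto (fun n => c * ((ENNReal.ofReal M) * eLpNorm (⇑((p n).1) - ⇑u) 2 (wMeasure ρ)
      + eLpNorm (⇑((p n).2) - ⇑u') 2 (wMeasure ρ))) atTop (𝓝 0) := by
    have h1 := ENNReal.Tendsto.const_mul (a := ENNReal.ofReal M) he1
      (Or.inr ENNReal.ofReal_ne_top)
    have h2 := h1.add he2
    have h3 := ENNReal.Tendsto.const_mul (a := c) (by simpa using h2) (Or.inr hcne)
    simpa using h3
  have conv2 : Tendsto (fun n => (q n).2) atTop (𝓝 w') := by
    refine (Lp.tendsto_Lp_iff_tendsto_eLpNorm' _ _).2 ?_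
    exact tendsto_of_tendsto_of_tendsto_of_le_of_le tendsto_const_nhds hcm2
      (fun n => zero_le) hb2
  exact mem_closure_iff_seq_limit.2 ⟨q, hqmem, conv1.prodMk_nhds conv2⟩
end
end
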